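/- Let F be the free group on a finite set S, and let U = S ∪ {e} with the partial multiplication where only products with e are defined (e·u = u·e = u). Then U satisfies the hypotheses of the Garside criterion: (U, ≤_L) and (U, ≤_R) are semilattices; joins interact correctly with the partial product; and for any a,b,u,v ∈ U with a·u, a·v, b·u, b·v all defined, either a,b have a right join or u,v have a left join. Consequently F × ℤ is a Garside group. -/

import Mathlib

section Garside

variable {G : Type*} [Group G]

/-- Left divisibility with respect to the positive monoid generated by `S`. -/
def DvdL (S : Set G) (a b : G) : Prop := ∃ c ∈ Submonoid.closure S, a * c = b

/-- Right divisibility with respect to the positive monoid generated by `S`. -/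
def DvdR (S : Set G) (a b : G) : Prop := ∃ c ∈ Submonoid.closure S, c * a = b

/-- The relation `le` restricted to the subset `P` is a lattice: any two elements of `P`
have a join and a meet in `P`. -/
def IsLatticeOn {α : Type*} (P : Set α) (le : α → α → Prop) : Prop :=
  ∀ a ∈ P, ∀ b ∈ P,
    (∃ j ∈ P, le a j ∧ le b j ∧ ∀ x ∈ P, le a x → le b x → le j x) ∧
    (∃ m ∈ P, le m a ∧ le m b ∧ ∀ x ∈ P, le x a → le x b → le x m)

/-- `(G, S, Δ)` is a Garside structure (Definition 2.5): `S` is a finite generating set,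
lengths of expressions of positive elements as products of nontrivial elements of `S` are
bounded, the left and right divisibility orders on the positive monoid `G⁺` are lattices,
and `S` is the balanced interval between `1` and `Δ`. -/
def IsGarsideStructure (G : Type*) [Group G] (S : Finset G) (Δ : G) : Prop :=
  Subgroup.closure (S : Set G) = ⊤ ∧
  (∀ g ∈ Submonoid.closure (S : Set G), ∃ N : ℕ, ∀ l : List G,
      (∀ x ∈ l, x ∈ S ∧ x ≠ 1) → l.prod = g → l.length ≤ N) ∧
  IsLatticeOn (Submonoid.closure (S : Set G) : Set G) (DvdL (S : Set G)) ∧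
  IsLatticeOn (Submonoid.closure (S : Set G) : Set G) (DvdR (S : Set G)) ∧
  (S : Set G) = {g | g ∈ Submonoid.closure (S : Set G) ∧ DvdL (S : Set G) g Δ} ∧
  (S : Set G) = {g | g ∈ Submonoid.closure (S : Set G) ∧ DvdR (S : Set G) g Δ}

/-- A group is Garside if it admits a Garside structure. -/
def IsGarside (G : Type*) [Group G] : Prop :=
  ∃ (S : Finset G) (Δ : G), IsGarsideStructure G S Δ

end Garside

/-- `w` is the join of `u` and `v` with respect to the relation `le`. -/
def IsJoinOf {α : Type*} (le : α → α → Prop) (u v w : α) : Prop :=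
  le u w ∧ le v w ∧ ∀ x, le u x → le v x → le w x

/-- `w` is the meet of `u` and `v` with respect to the relation `le`. -/
def IsMeetOf {α : Type*} (le : α → α → Prop) (u v w : α) : Prop :=
  le w u ∧ le w v ∧ ∀ x, le x u → le x v → le x w

namespace FreeGarside

variable {S : Type*}

/-- On `U = S ∪ {e}` (encoded as `Option S` with `none = e`), only products with the identity
are defined. -/
def Defined (u v : Option S) : Prop := u = none ∨ v = none

/-- The value of the partial product on `U = S ∪ {e}`: `e · u = u · e = u`. -/
def pmul (u v : Option S) : Option S := match u with | none => v | some s => some s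

/-- The prefix order on `U = S ∪ {e}`. -/
def leL (u v : Option S) : Prop := ∃ w, Defined u w ∧ pmul u w = v

/-- The suffix order on `U = S ∪ {e}`. -/
def leR (u v : Option S) : Prop := ∃ w, Defined w u ∧ pmul w u = v

end FreeGarside

set_option linter.unusedSectionVars false
set_option maxHeartbeats 1000000

namespace FGAux
open FreeGroup List

variable {S : Type*} [DecidableEq S]



def RR : S × Bool → S × Bool → Prop := fun p q => ¬(p.1 = q.1 ∧ p.2 = !q.2)

lemma reduce_eq_self_of_chain' {L : List (S × Bool)} (h : List.Chain' RR L) : reduce L = L := by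
  induction L with
  | nil => rfl
  | cons x L ih =>
    have ht := ih h.tail
    rw [reduce.cons, ht]
    cases L with
    | nil => rfl
    | cons hd tl =>
      have : RR x hd := (List.isChain_cons_cons.1 h).1
      simp only []
      rw [if_neg this]

lemma chain'_reduce (L : List (S × Bool)) : List.Chain' RR (reduce L) := by
  induction L with
  | nil => exact List.isChain_nil
  | cons x L ih =>
    rw [reduce.cons]
    cases hL : reduce L with
    | nil => exact List.isChain_singleton _
    | cons hd tl =>
      rw [hL] at ih
      by_cases hc : x.1 = hd.1 ∧ x.2 = !hd.2
      · simp only [if_pos hc]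
        exact ih.tail
      · simp only [if_neg hc]
        exact List.isChain_cons_cons.2 ⟨hc, ih⟩

lemma chain'_toWord (x : FreeGroup S) : List.Chain' RR x.toWord := by
  rw [← reduce_toWord]; exact chain'_reduce _

lemma toWord_mk_of_chain' {L : List (S × Bool)} (h : List.Chain' RR L) : (mk L).toWord = L := by
  rw [toWord_mk, reduce_eq_self_of_chain' h]






def npos (L : List (S × Bool)) : ℕ := L.countP (fun p => p.2)
def nneg (L : List (S × Bool)) : ℕ := L.countP (fun p => !p.2)

lemma npos_add_nneg (L : List (S × Bool)) : npos L + nneg L = L.length := by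
  induction L with
  | nil => rfl
  | cons x L ih =>
    simp only [npos, nneg, List.countP_cons, List.length_cons] at *
    cases h : x.2 <;> simp [h] <;> omega

lemma nneg_invRev (L : List (S × Bool)) : nneg (invRev L) = npos L := by
  simp [nneg, npos, invRev, List.countP_reverse, List.countP_map, Function.comp_def]

lemma npos_take_drop (L : List (S × Bool)) (i : ℕ) :
    npos (L.take i) + npos (L.drop i) = npos L := by
  rw [npos, npos, npos, ← List.countP_append, List.take_append_drop]

lemma nneg_take_drop (L : List (S × Bool)) (i : ℕ) :
    nneg (L.take i) + nneg (L.drop i) = nneg L := by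
  rw [nneg, nneg, nneg, ← List.countP_append, List.take_append_drop]

lemma chain'_invRev {L : List (S × Bool)} (h : List.Chain' RR L) : List.Chain' RR (invRev L) := by
  rw [invRev]
  unfold List.Chain' at h ⊢
  rw [List.isChain_reverse]
  rw [List.isChain_map]
  refine h.imp ?_
  rintro ⟨a, ba⟩ ⟨c, bc⟩ hr
  simp only [RR, flip] at *
  rintro ⟨h1, h2⟩
  exact hr ⟨h1.symm, by revert h2; cases ba <;> cases bc <;> simp⟩







def q (x : FreeGroup S) : ℕ := nneg x.toWord


lemma q_inv (x : FreeGroup S) : q x⁻¹ = npos x.toWord := by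
  rw [q, toWord_inv]
  simp [nneg, npos, invRev, List.countP_reverse, List.countP_map, Function.comp_def]

/-- one-step reduction decreases nneg -/
lemma nneg_le_of_red {L1 L2 : List (S × Bool)} (h : Red L1 L2) : nneg L2 ≤ nneg L1 := by
  induction h with
  | refl => exact le_rfl
  | tail _ step ih =>
    refine le_trans ?_ ih
    rcases step with @⟨A, B, x, b⟩
    simp only [nneg, List.countP_append, List.countP_cons]
    cases b <;> simp <;> omega

lemma q_mk_le (L : List (S × Bool)) : q (mk L) ≤ nneg L := by
  rw [q, toWord_mk]
  exact nneg_le_of_red reduce.red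

lemma q_mul_le (x y : FreeGroup S) : q (x * y) ≤ q x + q y := by
  conv_lhs => rw [← mk_toWord (x := x), ← mk_toWord (x := y), mul_mk]
  refine le_trans (q_mk_le _) ?_
  rw [nneg, List.countP_append]; rfl

lemma toWord_mul_junction {L1 L2 : List (S × Bool)} (h1 : List.Chain' RR L1)
    (h2 : List.Chain' RR L2)
    (hj : ∀ p ∈ L1.getLast?, ∀ r ∈ L2.head?, RR p r) :
    (mk L1 * mk L2).toWord = L1 ++ L2 := by
  rw [mul_mk]
  exact toWord_mk_of_chain' (List.isChain_append.2 ⟨h1, h2, hj⟩)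

lemma q_mul_junction {L1 L2 : List (S × Bool)} (h1 : List.Chain' RR L1)
    (h2 : List.Chain' RR L2)
    (hj : ∀ p ∈ L1.getLast?, ∀ r ∈ L2.head?, RR p r) :
    q (mk L1 * mk L2) = nneg L1 + nneg L2 := by
  rw [q, toWord_mul_junction h1 h2 hj, nneg, List.countP_append]; rfl







lemma q_mk_eq {L : List (S × Bool)} (h : List.Chain' RR L) : q (mk L) = nneg L := by
  rw [q, toWord_mk_of_chain' h]

lemma dichotomy {u v : List (S × Bool)} (huv : List.Chain' RR (u ++ v)) (x : FreeGroup S) :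
    nneg u + q x ≤ q (mk u * x) ∨ npos v + q x ≤ q ((mk v)⁻¹ * x) := by
  have hu : List.Chain' RR u := huv.prefix (List.prefix_append u v)
  have hv : List.Chain' RR v := huv.suffix (List.suffix_append u v)
  have hX := chain'_toWord x
  rcases hXc : x.toWord with _ | ⟨p, X'⟩
  · left
    have hx1 : x = 1 := toWord_eq_nil_iff.1 hXc
    rw [hx1, mul_one, q_mk_eq hu]
    simp [q, toWord_one, nneg]
  · rcases hu0 : u with _ | ⟨u0, u'⟩
    · left
      simp [← one_eq_mk, nneg]
    · rcases hv0 : v with _ | ⟨ev, v'⟩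
      · right
        simp [← one_eq_mk, npos]
      rw [← hu0, ← hv0]
      have hune : u ≠ [] := by rw [hu0]; simp
      set eu := u.getLast hune with heu
      have hgl : u.getLast? = some eu := List.getLast?_eq_getLast hune
      have hj : RR eu ev := by
        have := (List.isChain_append.1 huv).2.2
        refine this eu hgl ev ?_
        rw [hv0]; rfl
      have hxmk : x = mk x.toWord := (mk_toWord).symm
      by_cases hc : RR eu p
      · left
        refine le_of_eq ?_
        conv_rhs => rw [hxmk, hXc]
        rw [q_mul_junction hu (by rw [← hXc]; exact hX) ?_]
        · rw [q, hXc]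
        · intro a ha b hb
          rw [hgl] at ha
          simp only [List.head?] at hb
          cases ha; cases hb; exact hc
      · right
        refine le_of_eq ?_
        have hc' : eu.1 = p.1 ∧ eu.2 = !p.2 := not_not.1 hc
        conv_rhs => rw [hxmk, hXc, inv_mk]
        rw [q_mul_junction (chain'_invRev hv) (by rw [← hXc]; exact hX) ?_]
        · rw [nneg_invRev, q, hXc]
        · intro a ha b hb
          have hgl2 : (invRev v).getLast? = some (ev.1, !ev.2) := by
            rw [invRev, List.getLast?_reverse, hv0]
            rfl
          rw [hgl2] at ha
          simp only [List.head?] at hb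
          cases ha; cases hb
          rintro ⟨h1, h2⟩
          simp only at h1 h2
          apply hj
          refine ⟨hc'.1.trans h1.symm, ?_⟩
          have : ev.2 = p.2 := by revert h2; cases ev.2 <;> cases p.2 <;> simp
          rw [hc'.2, this]






abbrev GG (S : Type*) := FreeGroup S × Multiplicative ℤ

def memP (x : GG S) : Prop := (q x.1 : ℤ) ≤ Multiplicative.toAdd x.2
def lL (x y : GG S) : Prop := memP (x⁻¹ * y)
def lR (x y : GG S) : Prop := memP (y * x⁻¹)

lemma lL_mk (g h : FreeGroup S) (a b : ℤ) :
    lL (g, Multiplicative.ofAdd a) (h, Multiplicative.ofAdd b) ↔ (q (g⁻¹ * h) : ℤ) ≤ b - a := by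
  simp [lL, memP, sub_eq_neg_add]

lemma lR_mk (g h : FreeGroup S) (a b : ℤ) :
    lR (g, Multiplicative.ofAdd a) (h, Multiplicative.ofAdd b) ↔ (q (h * g⁻¹) : ℤ) ≤ b - a := by
  simp [lR, memP, sub_eq_add_neg]

lemma q_one' : q (1 : FreeGroup S) = 0 := by simp [q, toWord_one, nneg]

lemma lL_refl (x : GG S) : lL x x := by simp [lL, memP, q_one']

lemma lL_trans {x y z : GG S} (h1 : lL x y) (h2 : lL y z) : lL x z := by
  simp only [lL, memP] at *
  have hle := q_mul_le (x⁻¹ * y).1 (y⁻¹ * z).1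
  have heq : (x⁻¹ * y).1 * (y⁻¹ * z).1 = (x⁻¹ * z).1 := by
    simp only [Prod.fst_mul, Prod.fst_inv]; group
  rw [heq] at hle
  have h2' : Multiplicative.toAdd (x⁻¹ * z).2 =
      Multiplicative.toAdd (x⁻¹ * y).2 + Multiplicative.toAdd (y⁻¹ * z).2 := by
    simp only [Prod.snd_mul, Prod.snd_inv, toAdd_mul, toAdd_inv]
    ring
  have := (Nat.cast_le (α := ℤ)).2 hle
  push_cast at this
  omega

/-- Existence of joins for the left order on the whole group. -/
lemma exists_joinL (x y : GG S) : ∃ j : GG S, lL x j ∧ lL y j ∧ ∀ z, lL x z → lL y z → lL j z := by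
  obtain ⟨g, za⟩ := x
  obtain ⟨a, rfl⟩ : ∃ a, Multiplicative.ofAdd a = za := ⟨Multiplicative.toAdd za, rfl⟩
  obtain ⟨h, zb⟩ := y
  obtain ⟨b, rfl⟩ : ∃ b, Multiplicative.ofAdd b = zb := ⟨Multiplicative.toAdd zb, rfl⟩
  set w : List (S × Bool) := (g⁻¹ * h).toWord with hw
  have hwc : List.Chain' RR w := chain'_toWord _
  set P : ℕ := npos w with hP
  set Q : ℕ := nneg w with hQ
  have hqgh : q (g⁻¹ * h) = Q := rfl
  have hqhg : q (h⁻¹ * g) = P := by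
    have he : h⁻¹ * g = (g⁻¹ * h)⁻¹ := by group
    rw [he, q_inv]
  by_cases hc1 : b + (P : ℤ) ≤ a
  · refine ⟨(g, Multiplicative.ofAdd a), lL_refl _, ?_, fun z hz _ => hz⟩
    rw [lL_mk, hqhg]; omega
  by_cases hc2 : a + (Q : ℤ) ≤ b
  · refine ⟨(h, Multiplicative.ofAdd b), ?_, lL_refl _, fun z _ hz => hz⟩
    rw [lL_mk, hqgh]; omega
  push_neg at hc1 hc2
  set i : ℕ := (b + P - a).toNat with hi
  have hi' : (i : ℤ) = b + P - a := by
    rw [hi]; exact Int.toNat_of_nonneg (by omega)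
  have hil : i ≤ w.length := by
    have hlen : (w.length : ℤ) = P + Q := by
      rw [← npos_add_nneg w]; push_cast; rfl
    omega
  set u : List (S × Bool) := w.take i with hu
  set v : List (S × Bool) := w.drop i with hv
  have huv : u ++ v = w := List.take_append_drop i w
  have hcu : List.Chain' RR u := hwc.take i
  have hcv : List.Chain' RR v := hwc.drop i
  have hmkuv : mk u * mk v = g⁻¹ * h := by
    rw [mul_mk, huv, hw, mk_toWord]
  have hcount1 : nneg u + npos u = i := by
    have h1 := npos_add_nneg u
    have h2 : u.length = i := by rw [hu, List.length_take]; omega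
    omega
  have hcount2 : npos u + npos v = P := npos_take_drop w i
  have hAB : a + (nneg u : ℤ) = b + (npos v : ℤ) := by
    have e1 : (nneg u : ℤ) + npos u = i := by exact_mod_cast hcount1
    have e2 : (npos u : ℤ) + npos v = P := by exact_mod_cast hcount2
    omega
  set c : FreeGroup S := g * mk u with hcdef
  set n : ℤ := a + (nneg u : ℤ) with hn
  refine ⟨(c, Multiplicative.ofAdd n), ?_, ?_, ?_⟩
  · rw [lL_mk]
    have he : g⁻¹ * c = mk u := by rw [hcdef]; group
    rw [he, q_mk_eq hcu]; omega
  · rw [lL_mk]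
    have he : h⁻¹ * c = (mk v)⁻¹ := by
      have hh : h = g * (mk u * mk v) := by rw [hmkuv]; group
      rw [hh, hcdef]; group
    rw [he, q_inv, toWord_mk_of_chain' hcv]
    omega
  · rintro ⟨f, zn⟩ hxz hyz
    obtain ⟨m, rfl⟩ : ∃ m, Multiplicative.ofAdd m = zn := ⟨Multiplicative.toAdd zn, rfl⟩
    rw [lL_mk] at hxz hyz ⊢
    have hgf : g⁻¹ * f = mk u * (c⁻¹ * f) := by rw [hcdef]; group
    have hhf : h⁻¹ * f = (mk v)⁻¹ * (c⁻¹ * f) := by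
      have hh : h = g * (mk u * mk v) := by rw [hmkuv]; group
      rw [hh, hcdef]; group
    rcases dichotomy (huv ▸ hwc) (c⁻¹ * f) with hd | hd
    · have hd' : (nneg u : ℤ) + q (c⁻¹ * f) ≤ q (g⁻¹ * f) := by exact_mod_cast hgf ▸ hd
      omega
    · have hd' : (npos v : ℤ) + q (c⁻¹ * f) ≤ q (h⁻¹ * f) := by exact_mod_cast hhf ▸ hd
      omega







/-- the letter-inverting automorphism -/
def psi : FreeGroup S →* FreeGroup S := FreeGroup.lift (fun s => (FreeGroup.of s)⁻¹)

lemma psi_of (s : S) : psi (FreeGroup.of s) = (FreeGroup.of s)⁻¹ := FreeGroup.lift_apply_of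

lemma psi_mk (L : List (S × Bool)) :
    psi (mk L) = mk (L.map (fun p => (p.1, !p.2))) := by
  induction L with
  | nil => simp only [List.map_nil, ← one_eq_mk, _root_.map_one]
  | cons p L ih =>
    have h1 : mk (p :: L) = mk [p] * mk L := by rw [mul_mk]; rfl
    have h2 : (p :: L).map (fun p => (p.1, !p.2)) =
        [(p.1, !p.2)] ++ L.map (fun p => (p.1, !p.2)) := rfl
    rw [h1, _root_.map_mul, ih, h2, ← mul_mk]
    congr 1
    obtain ⟨s, b⟩ := p
    cases b
    · show psi (FreeGroup.of s)⁻¹ = mk [(s, true)]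
      rw [_root_.map_inv, psi_of, inv_inv]; rfl
    · show psi (FreeGroup.of s) = mk [(s, false)]
      rw [psi_of]
      rfl

lemma psi_psi (x : FreeGroup S) : psi (psi x) = x := by
  have : (psi (S := S)).comp psi = MonoidHom.id _ := by
    apply FreeGroup.ext_hom
    intro s
    simp [psi_of, MonoidHom.comp_apply, _root_.map_inv]
  calc psi (psi x) = ((psi (S := S)).comp psi) x := rfl
  _ = x := by rw [this]; rfl

lemma chain'_map_inv {L : List (S × Bool)} (h : List.Chain' RR L) :
    List.Chain' RR (L.map (fun p => (p.1, !p.2))) := by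
  unfold List.Chain' at h ⊢
  rw [List.isChain_map]
  refine h.imp ?_
  rintro ⟨s, b⟩ ⟨t, c⟩ hr
  simp only [RR] at *
  rintro ⟨h1, h2⟩
  exact hr ⟨h1, by revert h2; cases b <;> cases c <;> simp⟩

lemma q_psi (x : FreeGroup S) : q (psi x) = q x⁻¹ := by
  conv_lhs => rw [← mk_toWord (x := x)]
  rw [psi_mk, q, toWord_mk_of_chain' (chain'_map_inv (chain'_toWord x)), q_inv]
  unfold nneg npos
  rw [List.countP_map]
  congr 1
  funext p
  simp




/-- the order-reversing involution for `lL` -/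
def Psi (x : GG S) : GG S := (psi x.1, x.2⁻¹)

lemma Psi_Psi (x : GG S) : Psi (Psi x) = x := by
  simp [Psi, psi_psi]

lemma lL_Psi {x y : GG S} : lL (Psi y) (Psi x) ↔ lL x y := by
  simp only [lL, memP, Psi, Prod.fst_mul, Prod.fst_inv, Prod.snd_mul, Prod.snd_inv]
  have h1 : (psi y.1)⁻¹ * psi x.1 = psi (y.1⁻¹ * x.1) := by
    rw [_root_.map_mul, _root_.map_inv]
  rw [h1]
  have h2 : q (psi (y.1⁻¹ * x.1)) = q (x.1⁻¹ * y.1) := by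
    rw [q_psi]; congr 1; group
  rw [h2]
  constructor <;> intro hle <;> [skip; skip] <;> · simp only [toAdd_mul, toAdd_inv] at *; omega

lemma exists_meetL (x y : GG S) :
    ∃ m : GG S, lL m x ∧ lL m y ∧ ∀ z, lL z x → lL z y → lL z m := by
  obtain ⟨J, hx, hy, hmin⟩ := exists_joinL (Psi x) (Psi y)
  refine ⟨Psi J, ?_, ?_, ?_⟩
  · refine lL_Psi.1 ?_
    rwa [Psi_Psi]
  · refine lL_Psi.1 ?_
    rwa [Psi_Psi]
  · intro z hzx hzy
    have h1 : lL (Psi x) (Psi z) := lL_Psi.2 hzx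
    have h2 : lL (Psi y) (Psi z) := lL_Psi.2 hzy
    have := hmin _ h1 h2
    have h3 : lL (Psi (Psi z)) (Psi J) := lL_Psi.2 this
    rwa [Psi_Psi] at h3

lemma lR_inv_iff {x y : GG S} : lR x y ↔ lL y⁻¹ x⁻¹ := by
  simp [lR, lL]

lemma exists_joinR (x y : GG S) :
    ∃ j : GG S, lR x j ∧ lR y j ∧ ∀ z, lR x z → lR y z → lR j z := by
  obtain ⟨M, hx, hy, hmax⟩ := exists_meetL x⁻¹ y⁻¹
  refine ⟨M⁻¹, ?_, ?_, ?_⟩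
  · rw [lR_inv_iff, inv_inv]; exact hx
  · rw [lR_inv_iff, inv_inv]; exact hy
  · intro z hxz hyz
    rw [lR_inv_iff] at hxz hyz ⊢
    rw [inv_inv]
    exact hmax _ hxz hyz

lemma exists_meetR (x y : GG S) :
    ∃ m : GG S, lR m x ∧ lR m y ∧ ∀ z, lR z x → lR z y → lR z m := by
  obtain ⟨J, hx, hy, hmin⟩ := exists_joinL x⁻¹ y⁻¹
  refine ⟨J⁻¹, ?_, ?_, ?_⟩
  · rw [lR_inv_iff, inv_inv]; exact hx
  · rw [lR_inv_iff, inv_inv]; exact hy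
  · intro z hzx hzy
    rw [lR_inv_iff] at hzx hzy ⊢
    rw [inv_inv]
    exact hmin _ hzx hzy









lemma memP_one : memP (1 : GG S) := by
  simp [memP, q_one']

lemma memP_mul {x y : GG S} (hx : memP x) (hy : memP y) : memP (x * y) := by
  simp only [memP, Prod.fst_mul, Prod.snd_mul, toAdd_mul] at *
  have := q_mul_le x.1 y.1
  have : (q (x.1 * y.1) : ℤ) ≤ q x.1 + q y.1 := by exact_mod_cast this
  omega

lemma lL_one_iff {x : GG S} : lL 1 x ↔ memP x := by simp [lL]

lemma lR_one_iff {x : GG S} : lR 1 x ↔ memP x := by simp [lR]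

lemma lR_trans {x y z : GG S} (h1 : lR x y) (h2 : lR y z) : lR x z := by
  simp only [lR] at *
  have : z * x⁻¹ = (z * y⁻¹) * (y * x⁻¹) := by group
  rw [this]
  exact memP_mul h2 h1

/-- the positive submonoid -/
def Mpos (S : Type*) [DecidableEq S] : Submonoid (GG S) where
  carrier := {x | memP x}
  one_mem' := memP_one
  mul_mem' := memP_mul

def tt : Multiplicative ℤ := Multiplicative.ofAdd 1

variable (S) in
def Sfin [Fintype S] : Finset (GG S) :=
  ({((1 : FreeGroup S), (1 : Multiplicative ℤ)), (1, tt)} : Finset (GG S)) ∪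
    Finset.univ.image (fun s => ((FreeGroup.of s : FreeGroup S), (1 : Multiplicative ℤ))) ∪
    Finset.univ.image (fun s => ((FreeGroup.of s)⁻¹, tt))

variable [Fintype S]

lemma mem_Sfin_iff {x : GG S} :
    x ∈ Sfin S ↔ x = (1, 1) ∨ x = (1, tt) ∨ (∃ s, x = (FreeGroup.of s, 1)) ∨
      (∃ s, x = ((FreeGroup.of s)⁻¹, tt)) := by
  simp [Sfin, or_assoc, eq_comm]

lemma q_of (s : S) : q (FreeGroup.of s) = 0 := by
  simp [q, toWord_of, nneg]

lemma q_of_inv (s : S) : q ((FreeGroup.of s)⁻¹) = 1 := by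
  rw [q_inv, toWord_of]
  simp [npos]

lemma closure_Sfin : Submonoid.closure ((Sfin S : Finset (GG S)) : Set (GG S)) = Mpos S := by
  apply _root_.le_antisymm
  · rw [Submonoid.closure_le]
    intro x hx
    rw [Finset.mem_coe, mem_Sfin_iff] at hx
    rcases hx with rfl | rfl | ⟨s, rfl⟩ | ⟨s, rfl⟩ <;>
      simp [Mpos, memP, q_one', q_of, q_of_inv, tt]
  · rintro ⟨g, z⟩ hx
    simp only [Mpos, Submonoid.mem_mk, Subsemigroup.mem_mk, Set.mem_setOf_eq, memP] at hx
    have key : ∀ L : List (S × Bool),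
        ((mk L, Multiplicative.ofAdd ((nneg L : ℤ))) : GG S) ∈
          Submonoid.closure ((Sfin S : Finset (GG S)) : Set (GG S)) := by
      intro L
      induction L with
      | nil =>
        have : ((mk [], Multiplicative.ofAdd ((nneg ([] : List (S × Bool)) : ℤ))) : GG S) = 1 := by
          simp [← one_eq_mk, nneg, Prod.mk_one_one]
        rw [this]
        exact one_mem _
      | cons p L ih =>
        have hsplit : ((mk (p :: L), Multiplicative.ofAdd ((nneg (p :: L) : ℤ))) : GG S) =
            (mk [p], Multiplicative.ofAdd ((nneg [p] : ℤ))) * (mk L, Multiplicative.ofAdd ((nneg L : ℤ))) := by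
          have h1 : mk (p :: L) = mk [p] * mk L := by rw [mul_mk]; rfl
          have h2 : Multiplicative.ofAdd ((nneg (p :: L) : ℤ)) =
              Multiplicative.ofAdd ((nneg [p] : ℤ)) * Multiplicative.ofAdd ((nneg L : ℤ)) := by
            rw [← ofAdd_add]
            congr 1
            have : nneg (p :: L) = nneg [p] + nneg L := by
              simp [nneg, List.countP_cons]; omega
            rw [this]; push_cast; ring
          rw [Prod.mk_mul_mk, ← h1, ← h2]
        rw [hsplit]
        refine mul_mem ?_ ih
        apply Submonoid.subset_closure
        rw [Finset.mem_coe, mem_Sfin_iff]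
        obtain ⟨s, b⟩ := p
        cases b
        · right; right; right
          refine ⟨s, ?_⟩
          have hof : (FreeGroup.of s)⁻¹ = mk [(s, false)] := by
            have h : FreeGroup.of s = mk [(s, true)] := rfl
            rw [h, FreeGroup.inv_mk]
            simp [FreeGroup.invRev]
          simp only [Prod.mk.injEq]
          refine ⟨hof.symm, ?_⟩
          show Multiplicative.ofAdd ((nneg [(s, false)] : ℤ)) = tt
          simp [nneg, tt]
        · right; right; left
          refine ⟨s, ?_⟩
          simp only [Prod.mk.injEq]
          refine ⟨rfl, ?_⟩
          show Multiplicative.ofAdd ((nneg [(s, true)] : ℤ)) = 1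
          simp [nneg]
    have hz : 0 ≤ Multiplicative.toAdd z - (q g : ℤ) := by omega
    have hpow : ∀ n : ℕ, (((1 : FreeGroup S), tt) : GG S) ^ n = (1, Multiplicative.ofAdd (n : ℤ)) := by
      intro n
      induction n with
      | zero => rfl
      | succ n ih =>
        rw [pow_succ, ih, Prod.mk_mul_mk, one_mul]
        congr 1
    have hdecomp : ((g, z) : GG S) =
        (mk g.toWord, Multiplicative.ofAdd ((nneg g.toWord : ℤ))) *
          (1, tt) ^ (Multiplicative.toAdd z - (q g : ℤ)).toNat := by
      rw [hpow, Prod.mk_mul_mk, mul_one, mk_toWord]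
      congr 1
      rw [← ofAdd_add, Int.toNat_of_nonneg hz]
      congr 1
      show Multiplicative.toAdd z = ((q g : ℤ)) + (Multiplicative.toAdd z - (q g : ℤ))
      ring
    rw [hdecomp]
    exact mul_mem (key _) (pow_mem (Submonoid.subset_closure (by
      rw [Finset.mem_coe, mem_Sfin_iff]; tauto)) _)

lemma mem_closure_iff {x : GG S} :
    x ∈ Submonoid.closure ((Sfin S : Finset (GG S)) : Set (GG S)) ↔ memP x := by
  rw [closure_Sfin]; rfl

lemma dvdL_iff {x y : GG S} : DvdL ((Sfin S : Finset (GG S)) : Set (GG S)) x y ↔ lL x y := by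
  constructor
  · rintro ⟨c, hc, rfl⟩
    rw [mem_closure_iff] at hc
    simpa [lL] using hc
  · intro h
    exact ⟨x⁻¹ * y, mem_closure_iff.2 h, by group⟩

lemma dvdR_iff {x y : GG S} : DvdR ((Sfin S : Finset (GG S)) : Set (GG S)) x y ↔ lR x y := by
  constructor
  · rintro ⟨c, hc, rfl⟩
    rw [mem_closure_iff] at hc
    simpa [lR] using hc
  · intro h
    exact ⟨y * x⁻¹, mem_closure_iff.2 h, by group⟩









variable [Fintype S]


lemma latticeL :
    IsLatticeOn ((Submonoid.closure ((Sfin S : Finset (GG S)) : Set (GG S)) : Submonoid (GG S)) :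
      Set (GG S)) (DvdL ((Sfin S : Finset (GG S)) : Set (GG S))) := by
  intro a ha b hb
  rw [SetLike.mem_coe, mem_closure_iff] at ha hb
  constructor
  · obtain ⟨j, hja, hjb, hmin⟩ := exists_joinL a b
    refine ⟨j, ?_, dvdL_iff.2 hja, dvdL_iff.2 hjb, ?_⟩
    · rw [SetLike.mem_coe, mem_closure_iff, ← lL_one_iff]
      exact lL_trans (lL_one_iff.2 ha) hja
    · intro x _ h1 h2
      exact dvdL_iff.2 (hmin x (dvdL_iff.1 h1) (dvdL_iff.1 h2))
  · obtain ⟨m, hma, hmb, hmax⟩ := exists_meetL a b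
    refine ⟨m, ?_, dvdL_iff.2 hma, dvdL_iff.2 hmb, ?_⟩
    · rw [SetLike.mem_coe, mem_closure_iff, ← lL_one_iff]
      exact hmax 1 (lL_one_iff.2 ha) (lL_one_iff.2 hb)
    · intro x _ h1 h2
      exact dvdL_iff.2 (hmax x (dvdL_iff.1 h1) (dvdL_iff.1 h2))

lemma latticeR :
    IsLatticeOn ((Submonoid.closure ((Sfin S : Finset (GG S)) : Set (GG S)) : Submonoid (GG S)) :
      Set (GG S)) (DvdR ((Sfin S : Finset (GG S)) : Set (GG S))) := by
  intro a ha b hb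
  rw [SetLike.mem_coe, mem_closure_iff] at ha hb
  constructor
  · obtain ⟨j, hja, hjb, hmin⟩ := exists_joinR a b
    refine ⟨j, ?_, dvdR_iff.2 hja, dvdR_iff.2 hjb, ?_⟩
    · rw [SetLike.mem_coe, mem_closure_iff, ← lR_one_iff]
      exact lR_trans (lR_one_iff.2 ha) hja
    · intro x _ h1 h2
      exact dvdR_iff.2 (hmin x (dvdR_iff.1 h1) (dvdR_iff.1 h2))
  · obtain ⟨m, hma, hmb, hmax⟩ := exists_meetR a b
    refine ⟨m, ?_, dvdR_iff.2 hma, dvdR_iff.2 hmb, ?_⟩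
    · rw [SetLike.mem_coe, mem_closure_iff, ← lR_one_iff]
      exact hmax 1 (lR_one_iff.2 ha) (lR_one_iff.2 hb)
    · intro x _ h1 h2
      exact dvdR_iff.2 (hmax x (dvdR_iff.1 h1) (dvdR_iff.1 h2))

/-- the Garside element -/
def Dlt : GG S := ((1 : FreeGroup S), tt)

lemma Dlt_comm (x : GG S) : x * Dlt = Dlt * x := by
  obtain ⟨g, z⟩ := x
  simp only [Dlt, Prod.mk_mul_mk, one_mul, mul_one]
  congr 1
  exact mul_comm z tt

lemma balanceL :
    ((Sfin S : Finset (GG S)) : Set (GG S)) =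
      {x : GG S | x ∈ Submonoid.closure ((Sfin S : Finset (GG S)) : Set (GG S)) ∧
        DvdL ((Sfin S : Finset (GG S)) : Set (GG S)) x (Dlt : GG S)} := by
  ext x
  simp only [Set.mem_setOf_eq, Finset.coe_sort_coe, Finset.mem_coe, SetLike.mem_coe,
    mem_closure_iff, dvdL_iff]
  constructor
  · intro hx
    rw [mem_Sfin_iff] at hx
    rcases hx with rfl | rfl | ⟨s, rfl⟩ | ⟨s, rfl⟩
    · constructor
      · simp [memP, q_one']
      · simp [lL, memP, Dlt, q_one', tt]
    · constructor
      · simp [memP, q_one', tt]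
      · simp [lL, memP, Dlt, q_one', tt]
    · constructor
      · simp [memP, q_of]
      · simp [lL, memP, Dlt, q_of_inv, tt]
    · constructor
      · simp [memP, q_of_inv, tt]
      · simp [lL, memP, Dlt, q_of, tt]
  · rintro ⟨h1, h2⟩
    obtain ⟨g, z⟩ := x
    simp only [memP, lL, Prod.fst_mul, Prod.fst_inv, Prod.snd_mul, Prod.snd_inv, Dlt,
      mul_one, toAdd_mul, toAdd_inv] at h1 h2
    rw [mem_Sfin_iff]
    set k : ℤ := Multiplicative.toAdd z with hk
    have hzk : z = Multiplicative.ofAdd k := rfl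
    have htt : Multiplicative.toAdd tt = 1 := rfl
    rw [htt] at h2
    have hq2 : (q (g⁻¹) : ℤ) ≤ 1 - k := by omega
    have hqg : (q g : ℤ) = nneg g.toWord := rfl
    have hqginv : (q (g⁻¹) : ℤ) = npos g.toWord := congrArg Nat.cast (q_inv g)
    have hk0 : 0 ≤ k := le_trans (by positivity) h1
    have hk1 : k ≤ 1 := by
      have : (0 : ℤ) ≤ npos g.toWord := by positivity
      omega
    interval_cases k
    · -- k = 0 : nneg = 0, npos ≤ 1
      have hnneg : nneg g.toWord = 0 := by omega
      have hnpos : npos g.toWord ≤ 1 := by omega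
      have hz1 : z = 1 := by rw [hzk]; rfl
      rcases hW : g.toWord with _ | ⟨⟨s, b⟩, W'⟩
      · left
        have : g = 1 := toWord_eq_nil_iff.1 hW
        rw [this, hz1]
      · have hb : b = true := by
          by_contra hb
          have : nneg g.toWord ≥ 1 := by
            rw [hW, nneg, List.countP_cons]
            cases b
            · simp
            · exact absurd rfl hb
          omega
        have hW' : W' = [] := by
          rcases W' with _ | ⟨⟨s', b'⟩, W''⟩
          · rfl
          · exfalso
            have h1' : npos g.toWord + nneg g.toWord ≥ 2 := by
              rw [npos_add_nneg, hW]
              simp [List.length_cons]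
            omega
        right; right; left
        refine ⟨s, ?_⟩
        have : g = FreeGroup.of s := by
          rw [← mk_toWord (x := g), hW, hb, hW']
          rfl
        rw [this, hz1]
    · -- k = 1 : npos = 0, nneg ≤ 1
      have hnpos : npos g.toWord = 0 := by omega
      have hnneg : nneg g.toWord ≤ 1 := by omega
      have hz1 : z = tt := by rw [hzk]; rfl
      rcases hW : g.toWord with _ | ⟨⟨s, b⟩, W'⟩
      · right; left
        have : g = 1 := toWord_eq_nil_iff.1 hW
        rw [this, hz1]
      · have hb : b = false := by
          by_contra hb
          have : npos g.toWord ≥ 1 := by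
            rw [hW, npos, List.countP_cons]
            cases b
            · exact absurd rfl hb
            · simp
          omega
        have hW' : W' = [] := by
          rcases W' with _ | ⟨⟨s', b'⟩, W''⟩
          · rfl
          · exfalso
            have h1' : npos g.toWord + nneg g.toWord ≥ 2 := by
              rw [npos_add_nneg, hW]
              simp [List.length_cons]
            omega
        right; right; right
        refine ⟨s, ?_⟩
        have : g = (FreeGroup.of s)⁻¹ := by
          rw [← mk_toWord (x := g), hW, hb, hW']
          have : (FreeGroup.of s)⁻¹ = mk [(s, false)] := by
            have h : FreeGroup.of s = mk [(s, true)] := rfl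
            rw [h, FreeGroup.inv_mk]
            simp [FreeGroup.invRev]
          rw [this]
        rw [this, hz1]

lemma balanceR :
    ((Sfin S : Finset (GG S)) : Set (GG S)) =
      {x : GG S | x ∈ Submonoid.closure ((Sfin S : Finset (GG S)) : Set (GG S)) ∧
        DvdR ((Sfin S : Finset (GG S)) : Set (GG S)) x (Dlt : GG S)} := by
  ext x
  have h := (Set.ext_iff.1 (balanceL (S := S))) x
  simp only [Set.mem_setOf_eq] at h ⊢
  rw [h, dvdL_iff, dvdR_iff]
  have h2 : lL x (Dlt : GG S) ↔ lR x Dlt := by rw [lL, lR, Dlt_comm x⁻¹]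
  rw [h2]






lemma closure_top : Subgroup.closure ((Sfin S : Finset (GG S)) : Set (GG S)) = ⊤ := by
  rw [eq_top_iff]
  rintro ⟨g, z⟩ _
  have hof : ∀ s : S, ((FreeGroup.of s, (1 : Multiplicative ℤ)) : GG S) ∈
      Subgroup.closure ((Sfin S : Finset (GG S)) : Set (GG S)) := by
    intro s
    apply Subgroup.subset_closure
    rw [Finset.mem_coe, mem_Sfin_iff]
    tauto
  have h1 : ∀ g : FreeGroup S, ((g, (1 : Multiplicative ℤ)) : GG S) ∈
      Subgroup.closure ((Sfin S : Finset (GG S)) : Set (GG S)) := by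
    intro g
    refine FreeGroup.induction_on g ?_ ?_ ?_ ?_
    · exact one_mem _
    · exact hof
    · intro s hs
      simpa using inv_mem hs
    · intro a b ha hb
      have : ((a * b, (1 : Multiplicative ℤ)) : GG S) =
          (a, (1 : Multiplicative ℤ)) * (b, (1 : Multiplicative ℤ)) := by
        simp
      rw [this]
      exact mul_mem ha hb
  have h2 : ((1, z) : GG S) ∈ Subgroup.closure ((Sfin S : Finset (GG S)) : Set (GG S)) := by
    have htt : (((1 : FreeGroup S), tt) : GG S) ∈
        Subgroup.closure ((Sfin S : Finset (GG S)) : Set (GG S)) := by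
      apply Subgroup.subset_closure
      rw [Finset.mem_coe, mem_Sfin_iff]
      tauto
    have hz : ((1, z) : GG S) = (((1 : FreeGroup S), tt) : GG S) ^ (Multiplicative.toAdd z) := by
      have : (((1 : FreeGroup S), tt) : GG S) ^ (Multiplicative.toAdd z) =
          ((1 : FreeGroup S) ^ (Multiplicative.toAdd z), tt ^ (Multiplicative.toAdd z)) := rfl
      rw [this, one_zpow]
      congr 1
      have : tt ^ (Multiplicative.toAdd z) = Multiplicative.ofAdd (Multiplicative.toAdd z • (1:ℤ)) := by
        rw [tt]
        exact (ofAdd_zsmul _ _).symm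
      rw [this, smul_eq_mul, mul_one]
      rfl
    rw [hz]
    exact zpow_mem htt _
  have : ((g, z) : GG S) = (g, 1) * (1, z) := by simp
  rw [this]
  exact mul_mem (h1 g) h2

def expSum : FreeGroup S →* Multiplicative ℤ := FreeGroup.lift (fun _ => Multiplicative.ofAdd 1)

def nu (x : GG S) : ℤ := Multiplicative.toAdd (expSum x.1) + 2 * Multiplicative.toAdd x.2

lemma nu_mul (x y : GG S) : nu (x * y) = nu x + nu y := by
  simp only [nu, Prod.fst_mul, Prod.snd_mul, _root_.map_mul, toAdd_mul]
  ring

lemma nu_one : nu (1 : GG S) = 0 := by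
  simp [nu]

lemma nu_ge_one {x : GG S} (hx : x ∈ Sfin S) (hne : x ≠ 1) : 1 ≤ nu x := by
  rw [mem_Sfin_iff] at hx
  rcases hx with rfl | rfl | ⟨s, rfl⟩ | ⟨s, rfl⟩
  · exact absurd rfl hne
  · simp [nu, tt]
  · simp [nu, expSum, FreeGroup.lift_apply_of]
  · simp [nu, expSum, _root_.map_inv, FreeGroup.lift_apply_of, tt]

lemma length_le_nu (l : List (GG S)) (hl : ∀ x ∈ l, x ∈ Sfin S ∧ x ≠ 1) :
    (l.length : ℤ) ≤ nu l.prod := by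
  induction l with
  | nil => simp [nu_one]
  | cons a l ih =>
    have ha := hl a List.mem_cons_self
    have h1 := nu_ge_one ha.1 ha.2
    have h2 := ih (fun x hx => hl x (List.mem_cons_of_mem a hx))
    rw [List.prod_cons, nu_mul, List.length_cons]
    push_cast
    omega


end FGAux

namespace FGOpt
open FreeGarside
variable {S : Type*}

lemma pmul_none (u : Option S) : pmul u none = u := by cases u <;> rfl

lemma leL_iff (u v : Option S) : leL u v ↔ u = none ∨ u = v := by
  constructor
  · rintro ⟨w, hd, hp⟩
    cases u with
    | none => exact Or.inl rfl
    | some s =>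
      rcases hd with h | rfl
      · exact absurd h (by simp)
      · right; rw [← hp, pmul_none]
  · rintro (rfl | rfl)
    · exact ⟨v, Or.inl rfl, rfl⟩
    · exact ⟨none, Or.inr rfl, pmul_none u⟩

lemma leR_iff (u v : Option S) : leR u v ↔ u = none ∨ u = v := by
  constructor
  · rintro ⟨w, hd, hp⟩
    rcases hd with rfl | rfl
    · right; rw [← hp]; rfl
    · left; rfl
  · rintro (rfl | rfl)
    · refine ⟨v, Or.inr rfl, ?_⟩
      cases v <;> rfl
    · exact ⟨none, Or.inl rfl, rfl⟩

lemma meet_exists (le : Option S → Option S → Prop)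
    (hle : ∀ u v, le u v ↔ u = none ∨ u = v) (u v : Option S) :
    ∃ m, IsMeetOf le u v m := by
  classical
  by_cases h : u = v
  · subst h
    exact ⟨u, (hle u u).2 (Or.inr rfl), (hle u u).2 (Or.inr rfl), fun x hx _ => hx⟩
  · refine ⟨none, (hle _ _).2 (Or.inl rfl), (hle _ _).2 (Or.inl rfl), ?_⟩
    intro x hxu hxv
    rcases (hle x u).1 hxu with rfl | rfl
    · exact (hle _ _).2 (Or.inl rfl)
    · rcases (hle x v).1 hxv with h' | rfl
      · exact (hle _ _).2 (Or.inl h')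
      · exact absurd rfl h

lemma join_self (le : Option S → Option S → Prop)
    (hle : ∀ u v, le u v ↔ u = none ∨ u = v) (u : Option S) : IsJoinOf le u u u :=
  ⟨(hle u u).2 (Or.inr rfl), (hle u u).2 (Or.inr rfl), fun _ hx _ => hx⟩

lemma join_none_eq (le : Option S → Option S → Prop)
    (hle : ∀ u v, le u v ↔ u = none ∨ u = v) {w : Option S}
    (h : IsJoinOf le none none w) : w = none := by
  have := h.2.2 none ((hle _ _).2 (Or.inl rfl)) ((hle _ _).2 (Or.inl rfl))
  rcases (hle w none).1 this with rfl | rfl <;> rfl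

lemma defined_some {s : S} {u : Option S} (h : Defined (some s) u) : u = none := by
  rcases h with h | h
  · exact absurd h (by simp)
  · exact h

lemma defined_some' {s : S} {u : Option S} (h : Defined u (some s)) : u = none := by
  rcases h with h | h
  · exact h
  · exact absurd h (by simp)

end FGOpt

open FreeGarside in
/-- **Remark after Theorem 3.9.** For the free group `F` on a finite set `S`, the set
`U = S ∪ {e}` with the trivial positive partial multiplication satisfies all the hypotheses
of the Garside criterion (Theorem 3.9), and consequently `F × ℤ` is a Garside group. -/
theorem freeGroup_prod_int_garside (S : Type*) [Fintype S] :
    ((∀ u v : Option S, ∃ m, IsMeetOf (leL (S := S)) u v m) ∧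
     (∀ u v : Option S, ∃ m, IsMeetOf (leR (S := S)) u v m)) ∧
    (∀ a u v w : Option S, Defined a u → Defined a v →
      IsJoinOf (leL (S := S)) u v w → Defined a w) ∧
    (∀ a u v w : Option S, Defined u a → Defined v a →
      IsJoinOf (leR (S := S)) u v w → Defined w a) ∧
    (∀ a b u v : Option S, Defined a u → Defined a v → Defined b u → Defined b v →
      (∃ j, IsJoinOf (leR (S := S)) a b j) ∨ (∃ j, IsJoinOf (leL (S := S)) u v j)) ∧
    IsGarside (FreeGroup S × Multiplicative ℤ) := by
  classical
  refine ⟨⟨?_, ?_⟩, ?_, ?_, ?_, ?_⟩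
  · intro u v
    exact FGOpt.meet_exists _ FGOpt.leL_iff u v
  · intro u v
    exact FGOpt.meet_exists _ FGOpt.leR_iff u v
  · intro a u v w hau hav hj
    cases a with
    | none => exact Or.inl rfl
    | some s =>
      have hu := FGOpt.defined_some hau
      have hv := FGOpt.defined_some hav
      subst hu; subst hv
      exact Or.inr (FGOpt.join_none_eq _ FGOpt.leL_iff hj)
  · intro a u v w hua hva hj
    cases a with
    | none => exact Or.inr rfl
    | some s =>
      have hu := FGOpt.defined_some' hua
      have hv := FGOpt.defined_some' hva
      subst hu; subst hv
      exact Or.inl (FGOpt.join_none_eq _ FGOpt.leR_iff hj)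
  · intro a b u v hau hav hbu hbv
    by_cases huv : u = v
    · right
      subst huv
      exact ⟨u, FGOpt.join_self _ FGOpt.leL_iff u⟩
    · left
      have ha : a = none := by
        cases a with
        | none => rfl
        | some s =>
          exact absurd ((FGOpt.defined_some hau).trans (FGOpt.defined_some hav).symm) huv
      have hb : b = none := by
        cases b with
        | none => rfl
        | some s =>
          exact absurd ((FGOpt.defined_some hbu).trans (FGOpt.defined_some hbv).symm) huv
      subst ha; subst hb
      exact ⟨none, FGOpt.join_self _ FGOpt.leR_iff none⟩
  · letI : DecidableEq S := Classical.decEq S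
    refine ⟨FGAux.Sfin S, FGAux.Dlt, FGAux.closure_top, ?_, FGAux.latticeL, FGAux.latticeR,
      FGAux.balanceL, FGAux.balanceR⟩
    intro g hg
    refine ⟨(FGAux.nu g).toNat, ?_⟩
    intro l hl hp
    have h1 := FGAux.length_le_nu l hl
    rw [hp] at h1
    omega
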